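/- arXiv:0908.3109 — 5 statements merged into one kernel-verified Lean document; each statement's English description precedes it below -/
import Mathlib

section
/- Let G be a finite simple graph and G^(0) its symmetric tube. Then every dart-vertex (v,u) of G^(0) has degree deg_G(v) in G^(0), and every pair-vertex (v,{a,b}) of G^(0) has degree 2 in G^(0). -/
open SimpleGraph

variable {V : Type*}

/-- A pair-vertex of the symmetric tube: a vertex `v` together with an unordered pair
of two distinct neighbors of `v`. -/
abbrev TubePair (G : SimpleGraph V) : Type _ :=
  {p : V × Sym2 V // ¬ p.2.IsDiag ∧ ∀ x ∈ p.2, G.Adj p.1 x}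

/-- The vertex set of the symmetric tube: darts of `G` together with pair-vertices. -/
abbrev TubeVertex (G : SimpleGraph V) : Type _ := G.Dart ⊕ TubePair G

/-- The symmetric tube `G⁽⁰⁾` of a simple graph `G`: an X-edge joins the darts `(v,u)` and
`(u,v)` for each edge `{v,u}` of `G`, and Y-edges join the pair-vertex `(v,{a,b})` to each of
the darts `(v,a)` and `(v,b)`. -/
def tube (G : SimpleGraph V) : SimpleGraph (TubeVertex G) where
  Adj x y :=
    match x, y with
    | Sum.inl d, Sum.inl d' => d' = d.symm
    | Sum.inl d, Sum.inr p => p.1.1 = d.fst ∧ d.snd ∈ p.1.2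
    | Sum.inr p, Sum.inl d => p.1.1 = d.fst ∧ d.snd ∈ p.1.2
    | Sum.inr _, Sum.inr _ => False
  symm := by
    constructor
    rintro (d | p) (d' | p') h
    · simp only at h ⊢
      rw [h, SimpleGraph.Dart.symm_symm]
    · exact h
    · exact h
    · exact h
  loopless := by
    constructor
    rintro (d | p) h
    · exact SimpleGraph.Dart.symm_ne d h.symm
    · exact h

/-- In the symmetric tube `G⁽⁰⁾`, every dart-vertex `(v,u)` has degree `deg_G v`,
and every pair-vertex `(v,{a,b})` has degree `2`. -/
theorem stmt_3 {V : Type*} [Fintype V] [DecidableEq V] (G : SimpleGraph V)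
    [DecidableRel G.Adj] :
    (∀ d : G.Dart,
        Nat.card ((tube G).neighborSet (Sum.inl d : TubeVertex G)) = G.degree d.fst) ∧
    (∀ p : TubePair G,
        Nat.card ((tube G).neighborSet (Sum.inr p : TubeVertex G)) = 2) := by
  constructor
  · intro d
    rw [← G.card_neighborSet_eq_degree d.fst, ← Nat.card_eq_fintype_card]
    apply Nat.card_congr
    refine
      { toFun := fun x =>
          match x with
          | ⟨Sum.inl d', h⟩ => ⟨d.snd, d.adj⟩
          | ⟨Sum.inr p, h⟩ => ⟨Sym2.Mem.other h.2, by
              have hm := Sym2.other_mem h.2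
              have h2 := p.2.2 _ hm
              have h1 : p.1.1 = d.fst := h.1
              exact Eq.mp (congrArg (fun w => G.Adj w (Sym2.Mem.other h.2)) h1) h2⟩
        invFun := fun y =>
          if hy : y.1 = d.snd then ⟨Sum.inl d.symm, rfl⟩
          else ⟨Sum.inr ⟨(d.fst, s(d.snd, y.1)),
            ⟨by
              rw [Sym2.isDiag_iff_proj_eq]
              exact fun h => hy h.symm,
             by
              intro x hx
              rw [Sym2.mem_iff] at hx
              rcases hx with rfl | rfl
              · exact d.adj
              · exact y.2⟩⟩, ⟨rfl, Sym2.mem_mk_left _ _⟩⟩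
        left_inv := ?_
        right_inv := ?_ }
    · rintro ⟨(d' | p), h⟩
      · have h' : d' = d.symm := h
        simp only [dif_pos rfl]
        exact Subtype.ext (congrArg Sum.inl h'.symm)
      · have h' : p.1.1 = d.fst ∧ d.snd ∈ p.1.2 := h
        have hne : Sym2.Mem.other h'.2 ≠ d.snd := Sym2.other_ne p.2.1 h'.2
        simp only [dif_neg hne]
        refine Subtype.ext (congrArg Sum.inr (Subtype.ext ?_))
        refine Prod.ext h'.1.symm ?_
        exact Sym2.other_spec h'.2
    · rintro ⟨y, hy⟩
      by_cases h : y = d.snd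
      · simp only [dif_pos h]
        exact Subtype.ext h.symm
      · simp only [dif_neg h]
        refine Subtype.ext ?_
        show Sym2.Mem.other (Sym2.mem_mk_left d.snd y) = y
        have := Sym2.other_spec (Sym2.mem_mk_left d.snd y)
        exact Sym2.congr_right.mp this
  · rintro ⟨⟨v, s⟩, hs⟩
    induction s using Sym2.ind with
    | _ a b =>
      obtain ⟨hnd, hadj⟩ := hs
      have hab : a ≠ b := by
        rw [Sym2.isDiag_iff_proj_eq] at hnd; exact hnd
      have ha : G.Adj v a := hadj a (Sym2.mem_mk_left _ _)
      have hb : G.Adj v b := hadj b (Sym2.mem_mk_right _ _)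
      have hset : (tube G).neighborSet
          (Sum.inr ⟨(v, s(a, b)), ⟨hnd, hadj⟩⟩ : TubeVertex G) =
          {Sum.inl ⟨(v, a), ha⟩, Sum.inl ⟨(v, b), hb⟩} := by
        ext x
        rcases x with d | p
        · constructor
          · intro hx
            have hx' : v = d.fst ∧ d.snd ∈ s(a, b) := hx
            rw [Sym2.mem_iff] at hx'
            obtain ⟨h1, h2 | h2⟩ := hx'
            · left
              exact congrArg Sum.inl (SimpleGraph.Dart.ext _ _
                (Prod.ext h1.symm h2))
            · right
              exact congrArg Sum.inl (SimpleGraph.Dart.ext _ _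
                (Prod.ext h1.symm h2))
          · intro hx
            rcases hx with hx | hx <;>
            · cases Sum.inl_injective hx
              exact ⟨rfl, by simp⟩
        · constructor
          · intro hx
            exact absurd hx (by exact fun h => h)
          · intro hx
            rcases hx with hx | hx <;> exact absurd hx (by simp)
      rw [hset, Nat.card_coe_set_eq]
      refine Set.ncard_pair ?_
      intro h
      exact hab (congrArg (fun x : G.Dart => x.snd) (Sum.inl_injective h))
end

section
/- Let G be a finite connected simple graph with at least one edge. Then its symmetric tube G^(0) is a connected graph. -/
open SimpleGraph

variable {V : Type*}

section
variable {V : Type*} {G : SimpleGraph V}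

lemma tube_reach_same_fst (d d' : G.Dart) (h : d.fst = d'.fst) :
    (tube G).Reachable (Sum.inl d) (Sum.inl d') := by
  by_cases hsnd : d.snd = d'.snd
  · have : d = d' := SimpleGraph.Dart.ext _ _ (Prod.ext h hsnd)
    rw [this]
  · have hp : ¬ (s(d.snd, d'.snd)).IsDiag ∧ ∀ x ∈ s(d.snd, d'.snd), G.Adj d.fst x := by
      constructor
      · exact hsnd
      · intro x hx
        rw [Sym2.mem_iff] at hx
        rcases hx with rfl | rfl
        · exact d.adj
        · rw [h]; exact d'.adj
    have p : TubePair G := ⟨(d.fst, s(d.snd, d'.snd)), hp⟩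
    refine SimpleGraph.Reachable.trans
      (SimpleGraph.Adj.reachable
        (show (tube G).Adj (Sum.inl d) (Sum.inr ⟨(d.fst, s(d.snd, d'.snd)), hp⟩) from
          ⟨rfl, Sym2.mem_mk_left _ _⟩))
      (SimpleGraph.Adj.reachable
        (show (tube G).Adj (Sum.inr ⟨(d.fst, s(d.snd, d'.snd)), hp⟩) (Sum.inl d') from
          ⟨h, Sym2.mem_mk_right _ _⟩))

lemma tube_reach_walk {u v : V} (w : G.Walk u v) :
    ∀ (d d' : G.Dart), d.fst = u → d'.fst = v →
      (tube G).Reachable (Sum.inl d) (Sum.inl d') := by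
  induction w with
  | nil => exact fun d d' hu hv => tube_reach_same_fst d d' (hu.trans hv.symm)
  | @cons u x v hadj p ih =>
    intro d d' hu hv
    have e : G.Dart := ⟨(u, x), hadj⟩
    refine (tube_reach_same_fst d ⟨(u, x), hadj⟩ hu).trans ?_
    refine SimpleGraph.Reachable.trans (SimpleGraph.Adj.reachable
      (show (tube G).Adj (Sum.inl (⟨(u,x),hadj⟩ : G.Dart))
        (Sum.inl (SimpleGraph.Dart.symm ⟨(u,x),hadj⟩)) from rfl)) ?_
    exact ih _ d' rfl hv

lemma tube_reach_darts (d d' : G.Dart) (hr : G.Reachable d.fst d'.fst) :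
    (tube G).Reachable (Sum.inl d) (Sum.inl d') := by
  obtain ⟨w⟩ := hr
  exact tube_reach_walk w d d' rfl rfl

lemma tube_reach_pair (p : TubePair G) :
    ∃ d : G.Dart, (tube G).Reachable (Sum.inr p) (Sum.inl d) := by
  obtain ⟨⟨v, s⟩, hd, hadj⟩ := p
  induction s using Sym2.ind with
  | _ a b =>
    have ha : G.Adj v a := hadj a (Sym2.mem_mk_left _ _)
    exact ⟨⟨(v, a), ha⟩, SimpleGraph.Adj.reachable ⟨rfl, Sym2.mem_mk_left _ _⟩⟩
end

/-- The symmetric tube of a finite connected simple graph with at least one edge is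
connected. -/
theorem stmt_6 {V : Type*} [Fintype V] (G : SimpleGraph V) (hG : G.Connected)
    (hE : G.edgeSet.Nonempty) : (tube G).Connected := by
  obtain ⟨e, he⟩ := hE
  induction e using Sym2.ind with
  | _ a b =>
  rw [SimpleGraph.mem_edgeSet] at he
  set d0 : G.Dart := ⟨(a, b), he⟩ with hd0
  have hdart : ∀ d : G.Dart, (tube G).Reachable (Sum.inl d0) (Sum.inl d) := fun d =>
    tube_reach_darts d0 d (hG.preconnected _ _)
  have hall : ∀ x : TubeVertex G, (tube G).Reachable (Sum.inl d0) x := by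
    rintro (d | p)
    · exact hdart d
    · obtain ⟨d, hd⟩ := tube_reach_pair p
      exact (hdart d).trans hd.symm
  rw [SimpleGraph.connected_iff]
  exact ⟨fun x y => (hall x).symm.trans (hall y), ⟨Sum.inl d0⟩⟩
end

section
/- Let n \geq 1 and let S_n = K_{1,n} be the star graph with center c and leaves labeled 1, ..., n. In the symmetric tube S_n^(0), the spanning subgraph T whose edge set consists of all n X-edges together with exactly those Y-edges joining the dart (c,a) to the pair-vertex (c,{a,b}) for which a < b or a = n, is a spanning tree of S_n^(0). -/
open SimpleGraph

variable {V : Type*}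

/-- The star graph `Sₙ = K_{1,n}` on `Fin (n+1)`: the center is `c = 0` and the leaf labeled
`i ∈ {1, …, n}` is the element `i` of `Fin (n+1)` (so the leaf labeled `n` is `Fin.last n`). -/
def starGraph (n : ℕ) : SimpleGraph (Fin (n + 1)) where
  Adj x y := (x = 0 ∧ y ≠ 0) ∨ (y = 0 ∧ x ≠ 0)
  symm := ⟨fun x y h => Or.symm h⟩
  loopless := ⟨by rintro x (⟨h1, h2⟩ | ⟨h1, h2⟩) <;> exact h2 h1⟩

/-- The spanning subgraph `T` of the symmetric tube `Sₙ⁽⁰⁾` whose edges are all the `n`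
X-edges together with exactly those Y-edges joining the dart `(c,a)` to the pair-vertex
`(c,{a,b})` for which `a < b` or `a = n` (the largest leaf). -/
def starTubeTree (n : ℕ) : SimpleGraph (TubeVertex (_root_.starGraph n)) where
  Adj x y :=
    match x, y with
    | Sum.inl d, Sum.inl d' => d' = d.symm
    | Sum.inl d, Sum.inr p => (p.1.1 = d.fst ∧ d.snd ∈ p.1.2) ∧
        ∃ b, p.1.2 = s(d.snd, b) ∧ (d.snd < b ∨ d.snd = Fin.last n)
    | Sum.inr p, Sum.inl d => (p.1.1 = d.fst ∧ d.snd ∈ p.1.2) ∧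
        ∃ b, p.1.2 = s(d.snd, b) ∧ (d.snd < b ∨ d.snd = Fin.last n)
    | Sum.inr _, Sum.inr _ => False
  symm := by
    constructor
    rintro (d | p) (d' | p') h
    · simp only at h ⊢
      rw [h, SimpleGraph.Dart.symm_symm]
    · exact h
    · exact h
    · exact h
  loopless := by
    constructor
    rintro (d | p) h
    · exact SimpleGraph.Dart.symm_ne d h.symm
    · exact h

private lemma list_exists_max {W : Type*} (h : W → ℕ) :
    ∀ (l : List W), l ≠ [] → ∃ u ∈ l, ∀ w ∈ l, h w ≤ h u := by
  intro l
  induction l with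
  | nil => simp
  | cons a l ih =>
    intro _
    rcases eq_or_ne l [] with rfl | hl
    · exact ⟨a, by simp, by simp⟩
    · obtain ⟨u, hu, hmax⟩ := ih hl
      rcases le_total (h a) (h u) with hle | hle
      · refine ⟨u, by simp [hu], ?_⟩
        intro w hw
        rcases List.mem_cons.mp hw with rfl | hw
        · exact hle
        · exact hmax w hw
      · refine ⟨a, by simp, ?_⟩
        intro w hw
        rcases List.mem_cons.mp hw with rfl | hw
        · exact le_rfl
        · exact (hmax w hw).trans hle

theorem isTree_of_height {W : Type*} (G : SimpleGraph W) (h : W → ℕ) (r : W)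
    (hdn : ∀ v, v ≠ r → ∃ u, G.Adj v u ∧ h u < h v)
    (hun : ∀ v u u', G.Adj v u → G.Adj v u' → h u < h v → h u' < h v → u = u')
    (hedge : ∀ u v, G.Adj u v → h u ≠ h v) :
    G.IsTree := by
  classical
  haveI : Nonempty W := ⟨r⟩
  constructor
  · -- connected
    have key : ∀ k v, h v ≤ k → G.Reachable v r := by
      intro k
      induction k with
      | zero =>
        intro v hv
        rcases eq_or_ne v r with rfl | hvr
        · exact Reachable.rfl
        · obtain ⟨u, _, hlt⟩ := hdn v hvr; omega
      | succ k ih =>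
        intro v hv
        rcases eq_or_ne v r with rfl | hvr
        · exact Reachable.rfl
        · obtain ⟨u, hadj, hlt⟩ := hdn v hvr
          exact (hadj.reachable).trans (ih u (by omega))
    have : ∀ v w : W, G.Reachable v w := fun v w =>
      (key (h v) v le_rfl).trans (key (h w) w le_rfl).symm
    exact ⟨this⟩
  · -- acyclic
    intro v c hc
    obtain ⟨u, hu_mem, hmax⟩ := list_exists_max h c.support (by
      cases c <;> simp)
    have hc' : (c.rotate u hu_mem).IsCycle := hc.rotate hu_mem
    have hsup : ∀ w ∈ (c.rotate u hu_mem).support, h w ≤ h u := by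
      intro w hw
      rw [Walk.support_eq_cons] at hw
      rcases List.mem_cons.mp hw with rfl | hw
      · exact le_rfl
      · exact hmax w (List.Perm.mem_iff (Walk.support_rotate c u hu_mem).perm |>.mp hw
          |> fun hw' => List.mem_of_mem_tail hw')
    set c' : G.Walk u u := c.rotate u hu_mem with hc'def
    clear_value c'
    cases c' with
    | nil => exact hc'.ne_nil rfl
    | @cons _ w _ hadj q =>
      have hw_mem : w ∈ (Walk.cons hadj q).support := by
        simp [Walk.support_cons]
      have hwlt : h w < h u :=
        lt_of_le_of_ne (hsup w hw_mem) (fun he => hedge u w hadj he.symm)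
      -- q : Walk w u; q.reverse : Walk u w
      have hqnn : ¬ q.reverse.Nil := by
        rw [Walk.nil_iff_length_eq, Walk.length_reverse]
        intro h0
        have := hc'.three_le_length
        simp [Walk.length_cons] at this
        omega
      obtain ⟨x, hadjx, q', hq'⟩ := Walk.not_nil_iff.mp hqnn
      have hx_mem : x ∈ (Walk.cons hadj q).support := by
        have : x ∈ q.reverse.support := by rw [hq']; simp [Walk.support_cons]
        rw [Walk.support_reverse] at this
        simp [Walk.support_cons]
        right
        exact List.mem_reverse.mp this
      have hxlt : h x < h u :=
        lt_of_le_of_ne (hsup x hx_mem) (fun he => hedge u x hadjx he.symm)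
      have hwx : w = x := hun u w x hadj hadjx hwlt hxlt
      have hmem : s(u, x) ∈ q.edges := by
        have : s(u, x) ∈ q.reverse.edges := by rw [hq']; simp [Walk.edges_cons]
        rw [Walk.edges_reverse] at this
        exact List.mem_reverse.mp this
      have hnodup := hc'.edges_nodup
      rw [Walk.edges_cons] at hnodup
      exact (List.nodup_cons.mp hnodup).1 (hwx ▸ hmem)


section StarTube

variable {n : ℕ}

/-- Height function on the tube vertices of the star graph. -/
private def sHeight (n : ℕ) : TubeVertex (_root_.starGraph n) → ℕ
  | Sum.inl d => if d.fst = 0 then (if d.snd = Fin.last n then 0 else 2)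
                 else (if d.fst = Fin.last n then 1 else 3)
  | Sum.inr p => if Fin.last n ∈ p.1.2 then 1 else 3

private lemma sHeight_inl (d : (_root_.starGraph n).Dart) :
    sHeight n (Sum.inl d) = if d.fst = 0 then (if d.snd = Fin.last n then 0 else 2)
      else (if d.fst = Fin.last n then 1 else 3) := rfl

private lemma sHeight_inr (p : TubePair (_root_.starGraph n)) :
    sHeight n (Sum.inr p) = if Fin.last n ∈ p.1.2 then 1 else 3 := rfl

private lemma dart_cases (d : (_root_.starGraph n).Dart) :
    (d.fst = 0 ∧ d.snd ≠ 0) ∨ (d.snd = 0 ∧ d.fst ≠ 0) := d.adj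

private lemma pair_center (p : TubePair (_root_.starGraph n)) : p.1.1 = 0 := by
  obtain ⟨⟨a, b⟩, hab⟩ := p.1.2.exists_rep
  by_contra h
  have hne : a ≠ b := by
    intro he
    exact p.2.1 (by rw [← hab, he]; exact Sym2.mk_isDiag_iff.mpr rfl)
  have ha := p.2.2 a (by rw [← hab]; exact Sym2.mem_mk_left a b)
  have hb := p.2.2 b (by rw [← hab]; exact Sym2.mem_mk_right a b)
  rcases ha with ⟨h1, _⟩ | ⟨h1, _⟩
  · exact h h1
  rcases hb with ⟨h2, _⟩ | ⟨h2, _⟩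
  · exact h h2
  exact hne (h1.trans h2.symm)

private lemma pair_repr (p : TubePair (_root_.starGraph n)) :
    ∃ a b : Fin (n + 1), a < b ∧ a ≠ 0 ∧ b ≠ 0 ∧ p.1.2 = s(a, b) := by
  obtain ⟨⟨a, b⟩, hab⟩ := p.1.2.exists_rep
  have hne : a ≠ b := by
    intro he
    exact p.2.1 (by rw [← hab, he]; exact Sym2.mk_isDiag_iff.mpr rfl)
  have hc := pair_center p
  have hmem : ∀ x ∈ p.1.2, x ≠ 0 := by
    intro x hx
    rcases p.2.2 x hx with ⟨h1, h2⟩ | ⟨h1, h2⟩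
    · exact h2
    · exact absurd hc h2
  have ha0 : a ≠ 0 := hmem a (by rw [← hab]; exact Sym2.mem_mk_left a b)
  have hb0 : b ≠ 0 := hmem b (by rw [← hab]; exact Sym2.mem_mk_right a b)
  rcases lt_or_gt_of_ne hne with hlt | hlt
  · exact ⟨a, b, hlt, ha0, hb0, hab.symm⟩
  · exact ⟨b, a, hlt, hb0, ha0, by rw [← hab, Sym2.eq_swap]⟩

end StarTube

/-- For every `n ≥ 1`, the spanning subgraph of `Sₙ⁽⁰⁾` consisting of all `n` X-edges
together with exactly those Y-edges joining the dart `(c,a)` to the pair-vertex `(c,{a,b})`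
for which `a < b` or `a = n` is a spanning tree of `Sₙ⁽⁰⁾`. -/
theorem stmt_7 (n : ℕ) (hn : 1 ≤ n) :
    starTubeTree n ≤ tube (_root_.starGraph n) ∧ (starTubeTree n).IsTree := by
  have hlast0 : (Fin.last n : Fin (n + 1)) ≠ 0 := by
    intro h
    have := congrArg Fin.val h
    simp [Fin.last] at this
    omega
  refine ⟨?_, ?_⟩
  · rintro (d | p) (d' | p') h
    · exact h
    · exact h.1
    · exact h.1
    · exact h
  · set root : TubeVertex (_root_.starGraph n) :=
      Sum.inl ⟨(0, Fin.last n), Or.inl ⟨rfl, hlast0⟩⟩ with hroot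
    apply isTree_of_height (starTubeTree n) (sHeight n) root
    · -- existence of lower neighbor
      rintro (d | p) hvr
      · rcases dart_cases d with ⟨h0, hs⟩ | ⟨hs0, hf⟩
        · by_cases hl : d.snd = Fin.last n
          · exact absurd (congrArg Sum.inl (SimpleGraph.Dart.ext _ _ (Prod.ext h0 hl))) hvr
          · refine ⟨Sum.inr ⟨(0, s(d.snd, Fin.last n)), ?_, ?_⟩, ?_, ?_⟩
            · simpa [Sym2.mk_isDiag_iff] using hl
            · intro x hx
              rcases Sym2.mem_iff.mp hx with rfl | rfl
              · exact Or.inl ⟨rfl, hs⟩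
              · exact Or.inl ⟨rfl, hlast0⟩
            · exact ⟨⟨h0.symm, Sym2.mem_mk_left _ _⟩,
                ⟨Fin.last n, rfl, Or.inl (Fin.lt_last_iff_ne_last.mpr hl)⟩⟩
            · rw [sHeight_inl, sHeight_inr]
              rw [if_pos h0, if_neg hl, if_pos (Sym2.mem_mk_right _ _)]
              omega
        · refine ⟨Sum.inl d.symm, rfl, ?_⟩
          rw [sHeight_inl, sHeight_inl]
          have h1 : d.symm.fst = d.snd := rfl
          have h2 : d.symm.snd = d.fst := rfl
          rw [h1, h2, if_pos hs0, if_neg hf]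
          by_cases hfl : d.fst = Fin.last n
          · rw [if_pos hfl, if_pos hfl]; omega
          · rw [if_neg hfl, if_neg hfl]; omega
      · obtain ⟨a, b, hab, ha0, hb0, hrep⟩ := pair_repr p
        have hc := pair_center p
        by_cases hbl : b = Fin.last n
        · refine ⟨Sum.inl ⟨(0, Fin.last n), Or.inl ⟨rfl, hlast0⟩⟩, ?_, ?_⟩
          · refine ⟨⟨hc, ?_⟩, ⟨a, ?_, Or.inr rfl⟩⟩
            · rw [hrep, hbl]; exact Sym2.mem_mk_right _ _
            · rw [hrep, hbl]; exact Sym2.eq_swap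
          · rw [sHeight_inr, sHeight_inl]
            rw [if_pos (show Fin.last n ∈ p.1.2 by rw [hrep, hbl]; exact Sym2.mem_mk_right _ _)]
            rw [if_pos rfl, if_pos rfl]
            omega
        · have hal : a ≠ Fin.last n := fun h => (Fin.le_last b).not_gt (h ▸ hab)
          refine ⟨Sum.inl ⟨(0, a), Or.inl ⟨rfl, ha0⟩⟩, ?_, ?_⟩
          · exact ⟨⟨hc, by rw [hrep]; exact Sym2.mem_mk_left _ _⟩, ⟨b, hrep, Or.inl hab⟩⟩
          · rw [sHeight_inr, sHeight_inl]
            have hnl : ¬ (Fin.last n ∈ p.1.2) := by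
              rw [hrep]
              intro hm
              rcases Sym2.mem_iff.mp hm with h | h
              · exact hal h.symm
              · exact hbl h.symm
            rw [if_neg hnl, if_pos rfl, if_neg hal]
            omega
    · -- uniqueness of lower neighbor
      have pairlow : ∀ (d : (_root_.starGraph n).Dart) (p : TubePair (_root_.starGraph n)),
          (starTubeTree n).Adj (Sum.inl d) (Sum.inr p) →
          sHeight n (Sum.inr p) < sHeight n (Sum.inl d) →
          d.fst = 0 ∧ d.snd ≠ Fin.last n ∧ p.1 = (0, s(d.snd, Fin.last n)) := by
        intro d p hadj hlt
        obtain ⟨⟨hp1, hp2⟩, _⟩ := hadj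
        have hc := pair_center p
        have hd0 : d.fst = 0 := hp1 ▸ hc
        rw [sHeight_inl, sHeight_inr, if_pos hd0] at hlt
        by_cases hl : d.snd = Fin.last n
        · rw [if_pos hl] at hlt
          split at hlt <;> omega
        · rw [if_neg hl] at hlt
          have hml : Fin.last n ∈ p.1.2 := by
            by_contra hml
            rw [if_neg hml] at hlt
            omega
          exact ⟨hd0, hl, Prod.ext hc ((Sym2.mem_and_mem_iff hl).mp ⟨hp2, hml⟩)⟩
      have dartdet : ∀ (p : TubePair (_root_.starGraph n)) (d : (_root_.starGraph n).Dart)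
          (a b : Fin (n + 1)), a < b → p.1.2 = s(a, b) →
          (starTubeTree n).Adj (Sum.inr p) (Sum.inl d) →
          sHeight n (Sum.inl d) < sHeight n (Sum.inr p) →
          (b = Fin.last n ∧ d.toProd = (0, Fin.last n)) ∨
          (b ≠ Fin.last n ∧ d.toProd = (0, a)) := by
        intro p d a b hab hrep hadj hlt
        obtain ⟨⟨hp1, hp2⟩, c, hc1, hc2⟩ := hadj
        have hc := pair_center p
        have hd0 : d.fst = 0 := hp1 ▸ hc
        by_cases hbl : b = Fin.last n
        · have hml : Fin.last n ∈ p.1.2 := by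
            rw [hrep, hbl]; exact Sym2.mem_mk_right _ _
          rw [sHeight_inr, if_pos hml, sHeight_inl, if_pos hd0] at hlt
          have hdl : d.snd = Fin.last n := by
            by_contra h
            rw [if_neg h] at hlt
            omega
          exact Or.inl ⟨hbl, Prod.ext hd0 hdl⟩
        · have hal : a ≠ Fin.last n := fun h => (Fin.le_last b).not_gt (h ▸ hab)
          have hsnd : d.snd = a := by
            rcases Sym2.mem_iff.mp (hrep ▸ hp2) with h | h
            · exact h
            · exfalso
              rw [hrep, h] at hc1
              rcases Sym2.eq_iff.mp hc1 with ⟨h1, _⟩ | ⟨h1, _⟩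
              · exact hab.ne h1
              · rcases hc2 with hc2 | hc2
                · rw [h] at hc2
                  exact hab.not_gt (h1 ▸ hc2)
                · exact hbl (h ▸ hc2)
          exact Or.inr ⟨hbl, Prod.ext hd0 hsnd⟩
      rintro (d | p) (e | q) (e' | q') hadj hadj' hlt hlt'
      · have h1 : e = d.symm := hadj
        have h2 : e' = d.symm := hadj'
        exact congrArg Sum.inl (h1.trans h2.symm)
      · exfalso
        obtain ⟨hd0, hsl, _⟩ := pairlow d q' hadj' hlt'
        have hs : d.snd ≠ 0 := by
          rcases dart_cases d with ⟨_, h⟩ | ⟨_, h⟩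
          · exact h
          · exact absurd hd0 h
        have he : e = d.symm := hadj
        subst he
        rw [sHeight_inl, sHeight_inl] at hlt
        have h1 : d.symm.fst = d.snd := rfl
        rw [h1, if_neg hs, if_pos hd0, if_neg hsl] at hlt
        split at hlt <;> omega
      · exfalso
        obtain ⟨hd0, hsl, _⟩ := pairlow d q hadj hlt
        have hs : d.snd ≠ 0 := by
          rcases dart_cases d with ⟨_, h⟩ | ⟨_, h⟩
          · exact h
          · exact absurd hd0 h
        have he : e' = d.symm := hadj'
        subst he
        rw [sHeight_inl, sHeight_inl] at hlt'
        have h1 : d.symm.fst = d.snd := rfl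
        rw [h1, if_neg hs, if_pos hd0, if_neg hsl] at hlt'
        split at hlt' <;> omega
      · obtain ⟨_, _, h1⟩ := pairlow d q hadj hlt
        obtain ⟨_, _, h2⟩ := pairlow d q' hadj' hlt'
        exact congrArg Sum.inr (Subtype.ext (h1.trans h2.symm))
      · obtain ⟨a, b, hab, ha0, hb0, hrep⟩ := pair_repr p
        rcases dartdet p e a b hab hrep hadj hlt with ⟨hx, h1⟩ | ⟨hx, h1⟩ <;>
          rcases dartdet p e' a b hab hrep hadj' hlt' with ⟨hy, h2⟩ | ⟨hy, h2⟩
        · exact congrArg Sum.inl (SimpleGraph.Dart.ext _ _ (h1.trans h2.symm))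
        · exact absurd hx hy
        · exact absurd hy hx
        · exact congrArg Sum.inl (SimpleGraph.Dart.ext _ _ (h1.trans h2.symm))
      · exact hadj'.elim
      · exact hadj.elim
      · exact hadj.elim
    · -- heights differ along edges
      rintro (d | p) (e | q) hadj
      · have he : e = d.symm := hadj
        subst he
        rw [sHeight_inl, sHeight_inl]
        have h1 : d.symm.fst = d.snd := rfl
        have h2 : d.symm.snd = d.fst := rfl
        rw [h1, h2]
        rcases dart_cases d with ⟨h0, hs⟩ | ⟨hs0, hf⟩
        · rw [if_pos h0, if_neg hs]
          by_cases hl : d.snd = Fin.last n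
          · rw [if_pos hl, if_pos hl]; omega
          · rw [if_neg hl, if_neg hl]; omega
        · rw [if_neg hf, if_pos hs0]
          by_cases hl : d.fst = Fin.last n
          · rw [if_pos hl, if_pos hl]; omega
          · rw [if_neg hl, if_neg hl]; omega
      · obtain ⟨⟨hp1, _⟩, _⟩ := hadj
        have hd0 : d.fst = 0 := hp1 ▸ pair_center q
        rw [sHeight_inl, sHeight_inr, if_pos hd0]
        split <;> split <;> omega
      · obtain ⟨⟨hp1, _⟩, _⟩ := hadj
        have hd0 : e.fst = 0 := hp1 ▸ pair_center p
        rw [sHeight_inl, sHeight_inr, if_pos hd0]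
        split <;> split <;> omega
      · exact hadj.elim
end

section
/- Let G be a finite connected simple graph with at least one edge whose vertex set carries a linear order, and let T_G be a spanning tree of G. For each vertex v, let M(v) denote the largest neighbor of v with respect to the linear order. Then the spanning subgraph T of the symmetric tube G^(0) whose edge set consists of the X-edges corresponding to the edges of T_G together with exactly those Y-edges joining the dart (v,a) to the pair-vertex (v,{a,b}) for which a < b or a = M(v), is a spanning tree of G^(0). -/
open SimpleGraph

variable {V : Type*}

/-- Given a spanning tree `T` of `G` and a choice function `M` (intended to pick the largest
neighbor of each vertex), the spanning subgraph of the symmetric tube `G⁽⁰⁾` whose edges are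
the X-edges corresponding to the edges of `T` together with exactly those Y-edges joining the
dart `(v,a)` to the pair-vertex `(v,{a,b})` for which `a < b` or `a = M v`. -/
def tubeTree [LinearOrder V] (G : SimpleGraph V) (T : SimpleGraph V) (M : V → V) :
    SimpleGraph (TubeVertex G) where
  Adj x y :=
    match x, y with
    | Sum.inl d, Sum.inl d' => d' = d.symm ∧ T.Adj d.fst d.snd
    | Sum.inl d, Sum.inr p => (p.1.1 = d.fst ∧ d.snd ∈ p.1.2) ∧
        ∃ b, p.1.2 = s(d.snd, b) ∧ (d.snd < b ∨ d.snd = M d.fst)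
    | Sum.inr p, Sum.inl d => (p.1.1 = d.fst ∧ d.snd ∈ p.1.2) ∧
        ∃ b, p.1.2 = s(d.snd, b) ∧ (d.snd < b ∨ d.snd = M d.fst)
    | Sum.inr _, Sum.inr _ => False
  symm := by
    constructor
    rintro (d | p) (d' | p') h
    · simp only at h ⊢
      obtain ⟨h1, h2⟩ := h
      subst h1
      exact ⟨(SimpleGraph.Dart.symm_symm d).symm, h2.symm⟩
    · exact h
    · exact h
    · exact h
  loopless := by
    constructor
    rintro (d | p) h
    · exact SimpleGraph.Dart.symm_ne d h.1.symm
    · exact h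

open Set

private lemma conn_delete {W : Type*} (H : SimpleGraph W) {x y : W} (hc : H.Connected)
    (hr : (H \ fromEdgeSet {s(x,y)}).Reachable x y) :
    (H \ fromEdgeSet {s(x,y)}).Connected := by
  have hne := hc.nonempty
  refine Connected.mk fun a b => ?_
  obtain ⟨p⟩ := hc.preconnected a b
  induction p with
  | nil => rfl
  | @cons u w b h q ih =>
    refine Reachable.trans ?_ ih
    by_cases he : s(u, w) = s(x, y)
    · rw [Sym2.eq_iff] at he
      rcases he with ⟨rfl, rfl⟩ | ⟨rfl, rfl⟩
      · exact hr
      · exact hr.symm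
    · exact Adj.reachable (by simp [sdiff_adj, h, he, fromEdgeSet_adj])

private lemma card_le_of_conn {W : Type*} [Fintype W] (H : SimpleGraph W) (hc : H.Connected) :
    Nat.card W ≤ H.edgeSet.ncard + 1 := by
  classical
  suffices h : ∀ n (H : SimpleGraph W), H.edgeSet.ncard = n → H.Connected →
      Nat.card W ≤ n + 1 from h _ H rfl hc
  intro n
  induction n using Nat.strong_induction_on with
  | _ n ih =>
    intro H hn hc
    by_cases hac : H.IsAcyclic
    · have ht : H.IsTree := ⟨hc, hac⟩
      have := ht.card_edgeFinset
      rw [Nat.card_eq_fintype_card, ← this, SimpleGraph.edgeFinset, ← ncard_eq_toFinset_card', hn]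
    · rw [SimpleGraph.IsAcyclic] at hac
      push_neg at hac
      obtain ⟨v, c, hcyc⟩ := hac
      have hlen : c.edges ≠ [] := by
        have h3 := hcyc.three_le_length
        intro h
        rw [← SimpleGraph.Walk.length_edges, h] at h3
        simp at h3
      obtain ⟨e, he⟩ := List.exists_mem_of_ne_nil _ hlen
      induction e using Sym2.ind with
      | _ x y =>
        have hxy := (SimpleGraph.adj_and_reachable_delete_edges_iff_exists_cycle).mpr ⟨v, c, hcyc, he⟩
        set H' := H \ fromEdgeSet {s(x,y)} with hH'
        have hc' : H'.Connected := conn_delete H hc hxy.2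
        have hes : H'.edgeSet = H.edgeSet \ {s(x,y)} := by
          rw [hH', edgeSet_sdiff, edgeSet_fromEdgeSet, edgeSet_sdiff_sdiff_isDiag]
        have hmem : s(x,y) ∈ H.edgeSet := hxy.1
        have hcard : H'.edgeSet.ncard = n - 1 := by
          rw [hes, ncard_diff_singleton_of_mem hmem, hn]
        have hn1 : 1 ≤ n := by
          rw [← hn]
          exact (Set.ncard_pos (toFinite _)).mpr ⟨_, hmem⟩
        have := ih (n-1) (by omega) H' hcard hc'
        omega

private lemma isTree_of_conn_card {W : Type*} [Fintype W] (H : SimpleGraph W) (hc : H.Connected)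
    (hcard : H.edgeSet.ncard + 1 ≤ Nat.card W) : H.IsTree := by
  classical
  refine ⟨hc, ?_⟩
  by_contra hac
  rw [SimpleGraph.IsAcyclic] at hac
  push_neg at hac
  obtain ⟨v, c, hcyc⟩ := hac
  have hlen : c.edges ≠ [] := by
    have h3 := hcyc.three_le_length
    intro h
    rw [← SimpleGraph.Walk.length_edges, h] at h3
    simp at h3
  obtain ⟨e, he⟩ := List.exists_mem_of_ne_nil _ hlen
  induction e using Sym2.ind with
  | _ x y =>
    have hxy := (SimpleGraph.adj_and_reachable_delete_edges_iff_exists_cycle).mpr ⟨v, c, hcyc, he⟩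
    set H' := H \ fromEdgeSet {s(x,y)} with hH'
    have hc' : H'.Connected := conn_delete H hc hxy.2
    have hes : H'.edgeSet = H.edgeSet \ {s(x,y)} := by
      rw [hH', edgeSet_sdiff, edgeSet_fromEdgeSet, edgeSet_sdiff_sdiff_isDiag]
    have hmem : s(x,y) ∈ H.edgeSet := hxy.1
    have h1 : 1 ≤ H.edgeSet.ncard :=
      (Set.ncard_pos (toFinite _)).mpr ⟨_, hmem⟩
    have hcard' : H'.edgeSet.ncard = H.edgeSet.ncard - 1 := by
      rw [hes, ncard_diff_singleton_of_mem hmem]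
    have := card_le_of_conn H' hc'
    omega

section Conn
variable {V : Type*} [LinearOrder V] {G T_G : SimpleGraph V} {M : V → V}

private lemma tt_le_tube : tubeTree G T_G M ≤ tube G := by
  rintro (d | p) (d' | p') h
  · exact h.1
  · exact h.1
  · exact h.1
  · exact h.elim

variable (hM : ∀ v, G.Adj v (M v) ∧ ∀ w, G.Adj v w → w ≤ M v)

/-- reach the canonical dart `(v, M v)` from any dart `(v, a)`. -/
private lemma reach_cdart (v a : V) (h : G.Adj v a) :
    (tubeTree G T_G M).Reachable (.inl ⟨(v,a),h⟩) (.inl ⟨(v, M v), (hM v).1⟩) := by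
  by_cases ha : a = M v
  · subst ha; rfl
  · have haM : a < M v := lt_of_le_of_ne ((hM v).2 a h) ha
    have hnd : ¬ (s(a, M v) : Sym2 V).IsDiag := by
      rw [Sym2.mk_isDiag_iff]; exact ha
    have hadj : ∀ x ∈ (s(a, M v) : Sym2 V), G.Adj v x := by
      intro x hx
      rw [Sym2.mem_iff] at hx
      rcases hx with rfl | rfl
      · exact h
      · exact (hM v).1
    set P : TubePair G := ⟨(v, s(a, M v)), hnd, hadj⟩ with hP
    have h1 : (tubeTree G T_G M).Adj (.inl ⟨(v,a),h⟩) (.inr P) := by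
      refine ⟨⟨rfl, ?_⟩, ⟨M v, rfl, Or.inl haM⟩⟩
      simp [hP]
    have h2 : (tubeTree G T_G M).Adj (.inr P) (.inl ⟨(v, M v), (hM v).1⟩) := by
      refine ⟨⟨rfl, ?_⟩, ⟨a, ?_, Or.inr rfl⟩⟩
      · simp [hP]
      · simp [hP, Sym2.eq_swap]
    exact (h1.reachable).trans h2.reachable

private lemma reach_c_of_TG (hle : T_G ≤ G) {u v : V} (h : T_G.Reachable u v) :
    (tubeTree G T_G M).Reachable (.inl ⟨(u, M u), (hM u).1⟩) (.inl ⟨(v, M v), (hM v).1⟩) := by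
  obtain ⟨p⟩ := h
  induction p with
  | nil => rfl
  | @cons a b c hab q ih =>
    have hG1 : G.Adj a b := hle hab
    have s1 := (reach_cdart (T_G := T_G) hM a b hG1).symm
    have s2 : (tubeTree G T_G M).Adj (.inl ⟨(a,b), hG1⟩) (.inl ⟨(b,a), hG1.symm⟩) := by
      exact ⟨rfl, hab⟩
    have s3 := reach_cdart (T_G := T_G) hM b a hG1.symm
    exact s1.trans (s2.reachable.trans (s3.trans ih))

private lemma pair_reach (v a b : V) (hab : a < b) (hq : ¬ (s(a,b) : Sym2 V).IsDiag ∧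
    ∀ x ∈ (s(a,b) : Sym2 V), G.Adj v x) :
    (tubeTree G T_G M).Reachable (.inr ⟨(v, s(a,b)), hq⟩) (.inl ⟨(v, M v), (hM v).1⟩) := by
  have hGa : G.Adj v a := hq.2 a (by simp)
  have h1 : (tubeTree G T_G M).Adj (.inr ⟨(v, s(a,b)), hq⟩) (.inl ⟨(v,a), hGa⟩) := by
    exact ⟨⟨rfl, by simp⟩, ⟨b, rfl, Or.inl hab⟩⟩
  exact h1.reachable.trans (reach_cdart hM v a hGa)

include hM in
private lemma tube_tree_conn (hle : T_G ≤ G) (htc : T_G.Connected) :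
    (tubeTree G T_G M).Connected := by
  have hne : Nonempty V := htc.nonempty
  obtain ⟨v0⟩ := hne
  have hne' : Nonempty (TubeVertex G) := ⟨.inl ⟨(v0, M v0), (hM v0).1⟩⟩
  have key : ∀ x : TubeVertex G, ∃ v : V,
      (tubeTree G T_G M).Reachable x (.inl ⟨(v, M v), (hM v).1⟩) := by
    rintro (d | p)
    · refine ⟨d.fst, ?_⟩
      have : d = ⟨(d.fst, d.snd), d.adj⟩ := rfl
      rw [this]
      exact reach_cdart hM d.fst d.snd d.adj
    · obtain ⟨⟨v, q⟩, hq⟩ := p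
      refine ⟨v, ?_⟩
      revert hq
      induction q using Sym2.ind with
      | _ a b =>
        intro hq
        rcases lt_trichotomy a b with h | h | h
        · exact pair_reach hM v a b h hq
        · exfalso; exact hq.1 (by simp [h])
        · have hq' : ¬ (s(b,a) : Sym2 V).IsDiag ∧ ∀ x ∈ (s(b,a) : Sym2 V), G.Adj v x := by
            rwa [Sym2.eq_swap] at hq
          have heq : (⟨(v, s(a,b)), hq⟩ : TubePair G) = ⟨(v, s(b,a)), hq'⟩ := by
            apply Subtype.ext
            simp [Sym2.eq_swap]
          rw [heq]
          exact pair_reach hM v b a h hq'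
  refine Connected.mk fun x y => ?_
  obtain ⟨u, hu⟩ := key x
  obtain ⟨w, hw⟩ := key y
  exact hu.trans ((reach_c_of_TG hM hle (htc.preconnected u w)).trans hw.symm)

end Conn

/-- The element of a `Sym2` other than `a` (junk value `a` if `a` is not a member). -/
private def pairOther {V : Type*} [DecidableEq V] (s : Sym2 V) (a : V) : V :=
  if h : a ∈ s then Sym2.Mem.other' h else a

/-- The injection used to bound the number of Y-edges. -/
private def yMap {V : Type*} [LinearOrder V] (G : SimpleGraph V) [DecidableRel G.Adj] (M : V → V)
    (x0 : TubeVertex G) : Sym2 (TubeVertex G) → TubeVertex G :=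
  Sym2.lift ⟨fun x y =>
    match x, y with
    | Sum.inl d, Sum.inr p =>
        if d.snd = M d.fst then
          (if h2 : G.Adj d.fst (pairOther p.1.2 d.snd) then
            Sum.inl ⟨(d.fst, pairOther p.1.2 d.snd), h2⟩ else x0)
        else Sum.inr p
    | Sum.inr p, Sum.inl d =>
        if d.snd = M d.fst then
          (if h2 : G.Adj d.fst (pairOther p.1.2 d.snd) then
            Sum.inl ⟨(d.fst, pairOther p.1.2 d.snd), h2⟩ else x0)
        else Sum.inr p
    | Sum.inl _, Sum.inl _ => x0
    | Sum.inr _, Sum.inr _ => x0,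
    by rintro (d | p) (d' | p') <;> rfl⟩

private lemma tube_tree_card {V : Type*} [Fintype V] [LinearOrder V]
    (G : SimpleGraph V) (T_G : SimpleGraph V) (hle : T_G ≤ G) (htree : T_G.IsTree)
    (M : V → V) (hM : ∀ v, G.Adj v (M v) ∧ ∀ w, G.Adj v w → w ≤ M v) :
    (tubeTree G T_G M).edgeSet.ncard + 1 ≤ Nat.card (TubeVertex G) := by
  classical
  set K := tubeTree G T_G M with hK
  obtain ⟨v0⟩ := htree.isConnected.nonempty
  set x0 : TubeVertex G := Sum.inl ⟨(v0, M v0), (hM v0).1⟩ with hx0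
  set f := yMap G M x0 with hf
  set XS : Set (Sym2 (TubeVertex G)) :=
    {e | e ∈ K.edgeSet ∧ ∃ d d' : G.Dart, e = s(Sum.inl d, Sum.inl d')} with hXS
  set YS : Set (Sym2 (TubeVertex G)) :=
    {e | e ∈ K.edgeSet ∧ ¬ ∃ d d' : G.Dart, e = s(Sum.inl d, Sum.inl d')} with hYS
  -- splitting the edge set
  have hsplit : K.edgeSet.ncard = XS.ncard + YS.ncard := by
    have hu : K.edgeSet = XS ∪ YS := by
      ext e
      simp only [hXS, hYS, Set.mem_union, Set.mem_setOf_eq]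
      constructor
      · intro he
        by_cases hp : ∃ d d' : G.Dart, e = s(Sum.inl d, Sum.inl d')
        · exact Or.inl ⟨he, hp⟩
        · exact Or.inr ⟨he, hp⟩
      · rintro (⟨h, -⟩ | ⟨h, -⟩) <;> exact h
    have hd : Disjoint XS YS := by
      rw [Set.disjoint_left]
      intro e h1 h2
      exact h2.2 h1.2
    rw [hu, ncard_union_eq hd (toFinite _) (toFinite _)]
  -- characterization of X-edges
  have xchar : ∀ e ∈ XS, ∃ d : G.Dart, e = s(Sum.inl d, Sum.inl d.symm)
      ∧ T_G.Adj d.fst d.snd := by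
    intro e he
    obtain ⟨hee, d, d', heq⟩ := he
    subst heq
    rw [mem_edgeSet] at hee
    obtain ⟨rfl, hT⟩ := hee
    exact ⟨d, rfl, hT⟩
  -- the forgetful map on X-edges
  set fst' : TubeVertex G → V := Sum.elim (fun d => d.fst) (fun p => p.1.1) with hfst'
  set φ : Sym2 (TubeVertex G) → Sym2 V := Sym2.map fst' with hφ
  have ximg : φ '' XS = T_G.edgeSet := by
    apply Set.Subset.antisymm
    · rintro _ ⟨e, he, rfl⟩
      obtain ⟨d, rfl, hT⟩ := xchar e he
      simpa [hφ, Sym2.map_pair_eq, hfst', mem_edgeSet] using hT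
    · intro e he
      induction e using Sym2.ind with
      | _ a b =>
        rw [mem_edgeSet] at he
        have hD : G.Adj a b := hle he
        refine ⟨s(Sum.inl ⟨(a,b), hD⟩, Sum.inl (⟨(a,b), hD⟩ : G.Dart).symm),
          ⟨(mem_edgeSet K).mpr ⟨rfl, he⟩, ⟨_, _, rfl⟩⟩, ?_⟩
        simp [hφ, Sym2.map_pair_eq, hfst']
  have xinj : Set.InjOn φ XS := by
    intro e1 h1 e2 h2 heq
    obtain ⟨d1, rfl, _⟩ := xchar e1 h1
    obtain ⟨d2, rfl, _⟩ := xchar e2 h2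
    simp only [hφ, Sym2.map_pair_eq, hfst', Sum.elim_inl, Dart.symm_toProd] at heq
    rcases Sym2.eq_iff.mp heq with ⟨ha, hb⟩ | ⟨ha, hb⟩
    · have : d1 = d2 := Dart.ext _ _ (Prod.ext ha (by simpa using hb))
      rw [this]
    · have : d1 = d2.symm := by
        apply Dart.ext
        rw [Dart.symm_toProd]
        exact Prod.ext (by simpa using ha) (by simpa using hb)
      rw [this, Dart.symm_symm, Sym2.eq_swap]
  have hX1 : XS.ncard = T_G.edgeSet.ncard := by
    rw [← ximg, ncard_image_of_injOn xinj]
  have hT : T_G.edgeSet.ncard + 1 = Nat.card V := by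
    have := htree.card_edgeFinset
    rw [Nat.card_eq_fintype_card, ← this, SimpleGraph.edgeFinset, ← ncard_eq_toFinset_card']
  -- characterization of Y-edges
  have ychar : ∀ e ∈ YS, ∃ (d : G.Dart) (p : TubePair G), e = s(Sum.inl d, Sum.inr p) := by
    intro e he
    induction e using Sym2.ind with
    | _ x y =>
      obtain ⟨hee, hnx⟩ := he
      rw [mem_edgeSet] at hee
      rcases x with d | p <;> rcases y with d' | p'
      · exact absurd ⟨d, d', rfl⟩ hnx
      · exact ⟨d, p', rfl⟩
      · exact ⟨d', p, Sym2.eq_swap⟩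
      · exact (hee : False).elim
  have yspec : ∀ e ∈ YS, ∃ (d : G.Dart) (p : TubePair G) (b : V),
      e = s(Sum.inl d, Sum.inr p) ∧ p.1.1 = d.fst ∧ p.1.2 = s(d.snd, b) ∧ b ≠ d.snd ∧
      ((d.snd = M d.fst ∧ b ≠ M d.fst ∧
          ∃ h2 : G.Adj d.fst b, f e = Sum.inl ⟨(d.fst, b), h2⟩) ∨
        (d.snd < b ∧ d.snd ≠ M d.fst ∧ f e = Sum.inr p)) := by
    intro e he
    obtain ⟨d, p, rfl⟩ := ychar e he
    have hadj : K.Adj (Sum.inl d) (Sum.inr p) := (mem_edgeSet K).mp he.1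
    obtain ⟨⟨hp1, hmem⟩, b, hpb, hor⟩ := hadj
    have hbne : b ≠ d.snd := by
      intro hb
      apply p.2.1
      rw [hpb, hb]
      exact Sym2.mk_isDiag_iff.mpr rfl
    have hoth : pairOther p.1.2 d.snd = b := by
      rw [pairOther, dif_pos hmem]
      have hsp := (Sym2.other_spec' hmem).trans hpb
      rcases Sym2.eq_iff.mp hsp with ⟨-, h⟩ | ⟨h1, h2⟩
      · exact h
      · exact absurd h1.symm hbne
    have hfe : f s(Sum.inl d, Sum.inr p) =
        (if d.snd = M d.fst then
          (if h2 : G.Adj d.fst (pairOther p.1.2 d.snd) then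
            Sum.inl ⟨(d.fst, pairOther p.1.2 d.snd), h2⟩ else x0)
        else Sum.inr p) := by
      rw [hf]
      exact Sym2.lift_mk _ _ _
    by_cases hd : d.snd = M d.fst
    · have hb' : b ∈ p.1.2 := by rw [hpb]; simp
      have hGb : G.Adj d.fst b := by
        have := p.2.2 b hb'
        rwa [hp1] at this
      refine ⟨d, p, b, rfl, hp1, hpb, hbne, Or.inl ⟨hd, ?_, hGb, ?_⟩⟩
      · rw [← hd]; exact hbne
      · rw [hfe, if_pos hd]
        simp_rw [hoth]
        rw [dif_pos hGb]
    · have hlt : d.snd < b := hor.resolve_right hd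
      exact ⟨d, p, b, rfl, hp1, hpb, hbne, Or.inr ⟨hlt, hd, by rw [hfe, if_neg hd]⟩⟩
  set DD : Set G.Dart := {d | d.snd ≠ M d.fst} with hDD
  set TGT : Set (TubeVertex G) := (Sum.inl '' DD) ∪ (Sum.inr '' Set.univ) with hTGT
  have hmaps : ∀ e ∈ YS, f e ∈ TGT := by
    intro e he
    obtain ⟨d, p, b, rfl, hp1, hpb, hbne, hcase | hcase⟩ := yspec _ he
    · obtain ⟨hd, hbM, h2, hfe⟩ := hcase
      rw [hfe]
      exact Or.inl ⟨⟨(d.fst, b), h2⟩, hbM, rfl⟩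
    · rw [hcase.2.2]
      exact Or.inr ⟨p, trivial, rfl⟩
  have hinjY : Set.InjOn f YS := by
    intro e1 h1 e2 h2 heq
    obtain ⟨d1, p1, b1, rfl, hp11, hp12, hbne1, hc1⟩ := yspec _ h1
    obtain ⟨d2, p2, b2, rfl, hp21, hp22, hbne2, hc2⟩ := yspec _ h2
    rcases hc1 with ⟨hd1, hbM1, hA1, hfe1⟩ | ⟨hlt1, hd1, hfe1⟩ <;>
      rcases hc2 with ⟨hd2, hbM2, hA2, hfe2⟩ | ⟨hlt2, hd2, hfe2⟩
    · rw [hfe1, hfe2] at heq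
      have h4 : (d1.fst, b1) = (d2.fst, b2) := congrArg Dart.toProd (Sum.inl.inj heq)
      rw [Prod.mk.injEq] at h4
      obtain ⟨hfst, hb⟩ := h4
      have hdd : d1 = d2 := Dart.ext _ _ (Prod.ext hfst (by rw [hd1, hd2, hfst]))
      have hpp : p1 = p2 := Subtype.ext (Prod.ext (by rw [hp11, hp21, hfst])
        (by rw [hp12, hp22, hdd, hb]))
      rw [hdd, hpp]
    · rw [hfe1, hfe2] at heq
      exact absurd heq (by simp)
    · rw [hfe1, hfe2] at heq
      exact absurd heq (by simp)
    · rw [hfe1, hfe2] at heq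
      have hpp : p1 = p2 := Sum.inr.inj heq
      have hfst : d1.fst = d2.fst := by rw [← hp11, ← hp21, hpp]
      have h12 : s(d1.snd, b1) = s(d2.snd, b2) := by rw [← hp12, ← hp22, hpp]
      rcases Sym2.eq_iff.mp h12 with ⟨hs, hb⟩ | ⟨hs, hb⟩
      · have hdd : d1 = d2 := Dart.ext _ _ (Prod.ext hfst hs)
        rw [hdd, hpp]
      · exfalso
        rw [hs] at hlt1
        rw [← hb] at hlt2
        exact absurd (hlt1.trans hlt2) (lt_irrefl _)
  have hY1 : YS.ncard ≤ DD.ncard + Nat.card (TubePair G) := by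
    refine (ncard_le_ncard_of_injOn f hmaps hinjY (toFinite _)).trans ?_
    have hdisj : Disjoint (Sum.inl '' DD)
        (Sum.inr '' (Set.univ : Set (TubePair G))) := by
      rw [Set.disjoint_left]
      rintro x ⟨d, -, rfl⟩ ⟨p, -, hpx⟩
      exact Sum.inr_ne_inl hpx
    rw [hTGT, ncard_union_eq hdisj (toFinite _) (toFinite _),
      ncard_image_of_injective _ Sum.inl_injective,
      ncard_image_of_injective _ Sum.inr_injective, ncard_univ]
  have hDart : DD.ncard + Nat.card V = Nat.card G.Dart := by
    have hcomp : DDᶜ = Set.range (fun v => (⟨(v, M v), (hM v).1⟩ : G.Dart)) := by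
      ext d
      simp only [hDD, Set.mem_compl_iff, Set.mem_setOf_eq, not_not, Set.mem_range]
      constructor
      · intro hd
        exact ⟨d.fst, Dart.ext _ _ (Prod.ext rfl hd.symm)⟩
      · rintro ⟨v, rfl⟩
        rfl
    have hrange : (Set.range (fun v => (⟨(v, M v), (hM v).1⟩ : G.Dart))).ncard
        = Nat.card V := by
      rw [← Set.image_univ, ncard_image_of_injective _ ?_, ncard_univ]
      intro a b hab
      exact congrArg (fun d : G.Dart => d.fst) hab
    have hc := Set.ncard_add_ncard_compl DD (toFinite _) (toFinite _)
    rw [hcomp, hrange] at hc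
    exact hc
  have htot : Nat.card (TubeVertex G) = Nat.card G.Dart + Nat.card (TubePair G) :=
    Nat.card_sum
  omega

/-- Let `G` be a finite connected simple graph with at least one edge whose vertex set
carries a linear order, let `T_G` be a spanning tree of `G`, and for each vertex `v` let
`M v` be the largest neighbor of `v`.  Then the spanning subgraph of the symmetric tube
`G⁽⁰⁾` whose edges are the X-edges corresponding to the edges of `T_G` together with exactly
those Y-edges joining the dart `(v,a)` to the pair-vertex `(v,{a,b})` for which `a < b` or
`a = M v` is a spanning tree of `G⁽⁰⁾`. -/
theorem stmt_8 {V : Type*} [Fintype V] [LinearOrder V] (G : SimpleGraph V)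
    (hG : G.Connected) (hE : G.edgeSet.Nonempty)
    (T_G : SimpleGraph V) (hle : T_G ≤ G) (htree : T_G.IsTree)
    (M : V → V) (hM : ∀ v, G.Adj v (M v) ∧ ∀ w, G.Adj v w → w ≤ M v) :
    tubeTree G T_G M ≤ tube G ∧ (tubeTree G T_G M).IsTree := by
  classical
  exact ⟨tt_le_tube, isTree_of_conn_card _ (tube_tree_conn hM hle htree.isConnected)
    (tube_tree_card G T_G hle htree M hM)⟩
end

section
/- Let G be a finite connected simple graph with m vertices and n \geq 1 edges whose vertex set carries a linear order, let T_G be a spanning tree of G, and let T be the spanning tree of the symmetric tube G^(0) whose edge set consists of the X-edges corresponding to the edges of T_G together with those Y-edges joining the dart (v,a) to the pair-vertex (v,{a,b}) for which a < b or a = M(v), where M(v) is the largest neighbor of v. Then the number of edges of G^(0) not in T equals (n - m + 1) + \sum_{v \in V(G)} \binom{deg(v) - 1}{2}. -/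
open SimpleGraph

variable {V : Type*}

section Aux

open Finset

lemma aux_pairs {α : Type*} [LinearOrder α] [DecidableEq α] (S : Finset α) :
    ((S ×ˢ S).filter fun p => p.2 < p.1).card = S.card.choose 2 := by
  rw [← Sym2.card_image_offDiag]
  apply Finset.card_bij (fun p _ => Sym2.mk p.1 p.2)
  · rintro ⟨a, b⟩ hab
    simp only [mem_filter, mem_product] at hab
    exact Finset.mem_image.2 ⟨(a, b), Finset.mem_offDiag.2 ⟨hab.1.1, hab.1.2, hab.2.ne'⟩, rfl⟩
  · rintro ⟨a, b⟩ hab ⟨a', b'⟩ hab' h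
    simp only [mem_filter, mem_product] at hab hab'
    rw [Sym2.eq_iff] at h
    rcases h with ⟨rfl, rfl⟩ | ⟨rfl, rfl⟩
    · rfl
    · exact absurd (hab.2.trans hab'.2) (lt_irrefl _)
  · intro z hz
    obtain ⟨⟨x, y⟩, hxy, rfl⟩ := Finset.mem_image.1 hz
    rw [Finset.mem_offDiag] at hxy
    rcases lt_trichotomy x y with h | h | h
    · exact ⟨(y, x), by simp [mem_filter, mem_product, hxy.1, hxy.2.1, h, Sym2.eq_swap], Sym2.eq_swap⟩
    · exact absurd h hxy.2.2
    · exact ⟨(x, y), by simp [mem_filter, mem_product, hxy.1, hxy.2.1, h], rfl⟩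

variable {V : Type*} {G : SimpleGraph V}

/-- Projection from tube vertices back to vertices of `G`. -/
def toV (G : SimpleGraph V) : TubeVertex G → V := Sum.elim (fun d => d.fst) (fun p => p.1.1)

lemma mem_tube_edgeSet (G : SimpleGraph V) {e : Sym2 (TubeVertex G)} :
    e ∈ (tube G).edgeSet ↔
      (∃ d : G.Dart, e = s(.inl d, .inl d.symm)) ∨
      (∃ (d : G.Dart) (p : TubePair G), p.1.1 = d.fst ∧ d.snd ∈ p.1.2 ∧ e = s(.inl d, .inr p)) := by
  constructor
  · induction e using Sym2.ind with
    | _ x y =>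
      intro h
      rw [SimpleGraph.mem_edgeSet] at h
      rcases x with d | p <;> rcases y with d' | p'
      · left
        refine ⟨d, ?_⟩
        have hd : d' = d.symm := h
        rw [hd]
      · right; exact ⟨d, p', h.1, h.2, rfl⟩
      · right; exact ⟨d', p, h.1, h.2, Sym2.eq_swap⟩
      · exact absurd h not_false
  · rintro (⟨d, rfl⟩ | ⟨d, p, h1, h2, rfl⟩) <;> rw [SimpleGraph.mem_edgeSet]
    · show d.symm = d.symm
      rfl
    · exact ⟨h1, h2⟩

/-- The triple type indexing the Y-edges outside the spanning tree. -/
abbrev TubeTrip (G : SimpleGraph V) [LinearOrder V] (M : V → V) : Type _ :=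
  {t : V × V × V // G.Adj t.1 t.2.1 ∧ G.Adj t.1 t.2.2 ∧ t.2.2 < t.2.1 ∧ t.2.1 ≠ M t.1}

/-- The Y-edge associated to a triple. -/
def gY (G : SimpleGraph V) [LinearOrder V] (M : V → V) : TubeTrip G M → Sym2 (TubeVertex G) :=
  fun t => s(Sum.inl ⟨(t.1.1, t.1.2.1), t.2.1⟩,
    Sum.inr ⟨(t.1.1, s(t.1.2.1, t.1.2.2)),
      ⟨by rw [Sym2.mk_isDiag_iff]; exact ne_of_gt t.2.2.2.1,
       by intro x hx
          rw [Sym2.mem_iff] at hx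
          rcases hx with rfl | rfl
          exacts [t.2.1, t.2.2.1]⟩⟩)

lemma gY_injective (G : SimpleGraph V) [LinearOrder V] (M : V → V) :
    Function.Injective (gY G M) := by
  rintro ⟨⟨v, a, b⟩, h⟩ ⟨⟨v', a', b'⟩, h'⟩ heq
  simp only [gY, Sym2.eq_iff, Sum.inl.injEq, Sum.inr.injEq, SimpleGraph.Dart.mk.injEq,
    Subtype.mk.injEq, Prod.mk.injEq, reduceCtorEq, false_and, and_false, or_false] at heq
  obtain ⟨⟨rfl, rfl⟩, -, h2⟩ := heq
  rcases h2 with ⟨-, rfl⟩ | ⟨h3, h4⟩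
  · rfl
  · exact absurd h.2.2.1 (by rw [h4]; exact lt_irrefl a)

end Aux

/-- Let `G` be a finite connected simple graph with `m` vertices and `n ≥ 1` edges whose
vertex set carries a linear order, let `T_G` be a spanning tree of `G`, and let `T` be the
spanning tree `tubeTree G T_G M` of the symmetric tube `G⁽⁰⁾`, where `M v` is the largest
neighbor of `v`.  Then the number of edges of `G⁽⁰⁾` not in `T` equals
`(n - m + 1) + ∑_v C(deg v - 1, 2)`. -/
theorem stmt_10 {V : Type*} [Fintype V] [LinearOrder V] (G : SimpleGraph V)
    [DecidableRel G.Adj] (hG : G.Connected) (m n : ℕ) (hm : m = Fintype.card V)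
    (hn : n = G.edgeFinset.card) (hn1 : 1 ≤ n)
    (T_G : SimpleGraph V) (hle : T_G ≤ G) (htree : T_G.IsTree)
    (M : V → V) (hM : ∀ v, G.Adj v (M v) ∧ ∀ w, G.Adj v w → w ≤ M v) :
    (Nat.card ↥((tube G).edgeSet \ (tubeTree G T_G M).edgeSet) : ℤ) =
      ((n : ℤ) - (m : ℤ) + 1) + ∑ v : V, (Nat.choose (G.degree v - 1) 2 : ℤ) := by
  classical
  set TT := tubeTree G T_G M with hTT
  set Diff : Set (Sym2 (TubeVertex G)) := (tube G).edgeSet \ TT.edgeSet with hDiffdef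
  set SX : Set (Sym2 (TubeVertex G)) :=
    {e | e ∈ Diff ∧ ∀ x ∈ e, ∃ d, x = Sum.inl d} with hSXdef
  set SY : Set (Sym2 (TubeVertex G)) :=
    {e | e ∈ Diff ∧ ¬ ∀ x ∈ e, ∃ d, x = Sum.inl d} with hSYdef
  have hunion : Diff = SX ∪ SY := by
    ext e
    simp only [hSXdef, hSYdef, Set.mem_union, Set.mem_setOf_eq]
    tauto
  have hdisj : Disjoint SX SY := Set.disjoint_left.2 (by rintro e ⟨-, h⟩ ⟨-, h'⟩; exact h' h)
  -- characterization of elements of SX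
  have hSXchar : ∀ e ∈ SX, ∃ d : G.Dart,
      ¬ T_G.Adj d.fst d.snd ∧ e = s(.inl d, .inl d.symm) := by
    rintro e ⟨⟨hmem, hnot⟩, hall⟩
    rcases (mem_tube_edgeSet G).1 hmem with ⟨d, rfl⟩ | ⟨d, p, h1, h2, rfl⟩
    · refine ⟨d, fun hT => hnot ?_, rfl⟩
      rw [SimpleGraph.mem_edgeSet]
      exact ⟨rfl, hT⟩
    · obtain ⟨d', hd'⟩ := hall (Sum.inr p) (Sym2.mem_mk_right _ _)
      exact absurd hd' (by simp)
  have hmap : ∀ d : G.Dart,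
      Sym2.map (toV G) s(Sum.inl d, Sum.inl d.symm) = s(d.fst, d.snd) := fun d => rfl
  -- SX is mapped bijectively onto the non-tree edges of G
  have hinjX : Set.InjOn (Sym2.map (toV G)) SX := by
    intro e1 h1 e2 h2 h
    obtain ⟨d1, -, rfl⟩ := hSXchar e1 h1
    obtain ⟨d2, -, rfl⟩ := hSXchar e2 h2
    rw [hmap, hmap] at h
    have hedge : d1.edge = d2.edge := h
    rcases (SimpleGraph.dart_edge_eq_iff d1 d2).1 hedge with rfl | rfl
    · rfl
    · show s(Sum.inl d2.symm, Sum.inl d2.symm.symm) = s(Sum.inl d2, Sum.inl d2.symm)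
      rw [SimpleGraph.Dart.symm_symm, Sym2.eq_swap]
  have himX : Sym2.map (toV G) '' SX = G.edgeSet \ T_G.edgeSet := by
    apply Set.Subset.antisymm
    · rintro _ ⟨e, heSX, rfl⟩
      obtain ⟨d, hT, rfl⟩ := hSXchar e heSX
      rw [hmap]
      exact ⟨d.adj, fun hmem => hT ((SimpleGraph.mem_edgeSet _).1 hmem)⟩
    · rintro e ⟨he, hne⟩
      induction e using Sym2.ind with
      | _ u v =>
        rw [SimpleGraph.mem_edgeSet] at he
        rw [SimpleGraph.mem_edgeSet] at hne
        refine ⟨s(Sum.inl (⟨(u, v), he⟩ : G.Dart), Sum.inl (⟨(u, v), he⟩ : G.Dart).symm),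
          ⟨⟨?_, ?_⟩, ?_⟩, rfl⟩
        · rw [SimpleGraph.mem_edgeSet]
          show (⟨(u, v), he⟩ : G.Dart).symm = (⟨(u, v), he⟩ : G.Dart).symm
          rfl
        · intro hmem
          rw [SimpleGraph.mem_edgeSet] at hmem
          exact hne hmem.2
        · intro x hx
          rw [Sym2.mem_iff] at hx
          rcases hx with rfl | rfl <;> exact ⟨_, rfl⟩
  -- SY is the range of gY
  have hSYrange : SY = Set.range (gY G M) := by
    apply Set.Subset.antisymm
    · rintro e ⟨⟨hmem, hnot⟩, hmix⟩
      rcases (mem_tube_edgeSet G).1 hmem with ⟨d, rfl⟩ | ⟨d, p, h1, h2, rfl⟩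
      · exact absurd (fun x hx => by
          rw [Sym2.mem_iff] at hx
          rcases hx with rfl | rfl <;> exact ⟨_, rfl⟩) hmix
      · obtain ⟨b, hb⟩ := Sym2.mem_iff_exists.1 h2
        have hbne : d.snd ≠ b := by
          intro hh
          exact p.2.1 (by rw [hb, ← hh]; exact Sym2.mk_isDiag_iff.2 rfl)
        have hnotadj : ¬ TT.Adj (Sum.inl d) (Sum.inr p) := fun h => hnot ((SimpleGraph.mem_edgeSet _).2 h)
        have hcond : ¬ (d.snd < b ∨ d.snd = M d.fst) := by
          intro hc
          exact hnotadj ⟨⟨h1, h2⟩, b, hb, hc⟩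
        push_neg at hcond
        have hblt : b < d.snd := lt_of_le_of_ne hcond.1 (Ne.symm hbne)
        have hadjb : G.Adj d.fst b := by
          have := p.2.2 b (by rw [hb]; exact Sym2.mem_mk_right _ _)
          rwa [h1] at this
        refine ⟨⟨(d.fst, d.snd, b), d.adj, hadjb, hblt, hcond.2⟩, ?_⟩
        obtain ⟨⟨pv, pz⟩, pprop⟩ := p
        dsimp only at h1 hb
        subst h1
        subst hb
        rfl
    · rintro e ⟨⟨⟨v, a, b⟩, hadj1, hadj2, hlt, hne⟩, rfl⟩
      have hd : (⟨(v, a), hadj1⟩ : G.Dart).snd ∈ (s(a, b) : Sym2 V) := Sym2.mem_mk_left _ _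
      refine ⟨⟨?_, ?_⟩, ?_⟩
      · simp only [gY]
        rw [SimpleGraph.mem_edgeSet]
        exact ⟨rfl, hd⟩
      · intro hmem
        simp only [gY] at hmem
        rw [SimpleGraph.mem_edgeSet] at hmem
        obtain ⟨⟨-, -⟩, b', hb', hc⟩ := hmem
        have hb'b : b' = b := by
          rw [Sym2.eq_iff] at hb'
          rcases hb' with ⟨-, rfl⟩ | ⟨h1, h2⟩
          · rfl
          · exact absurd (h2 ▸ hlt) (lt_irrefl _)
        rcases hc with hc | hc
        · rw [hb'b] at hc
          exact absurd (hlt.trans hc) (lt_irrefl _)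
        · exact hne hc
      · intro hall
        simp only [gY] at hall
        obtain ⟨d', hd'⟩ := hall _ (Sym2.mem_mk_right _ _)
        exact absurd hd' (by simp)
  -- cardinality of SX
  have hkn : T_G.edgeFinset.card ≤ n := by
    rw [hn]
    exact Finset.card_le_card (SimpleGraph.edgeFinset_mono hle)
  have hcardSX : SX.ncard = n - T_G.edgeFinset.card := by
    rw [← Set.ncard_image_of_injOn hinjX, himX,
      Set.ncard_diff (SimpleGraph.edgeSet_mono hle),
      ← SimpleGraph.coe_edgeFinset, ← SimpleGraph.coe_edgeFinset,
      Set.ncard_coe_finset, Set.ncard_coe_finset, hn]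
  -- cardinality of SY
  have hcardSY : SY.ncard = ∑ v : V, (G.degree v - 1).choose 2 := by
    rw [hSYrange, ← Nat.card_coe_set_eq, Nat.card_range_of_injective (gY_injective G M)]
    have e1 : TubeTrip G M ≃ Σ v : V, {ab : V × V //
        G.Adj v ab.1 ∧ G.Adj v ab.2 ∧ ab.2 < ab.1 ∧ ab.1 ≠ M v} :=
      Equiv.subtypeProdEquivSigmaSubtype
        (fun v (ab : V × V) => G.Adj v ab.1 ∧ G.Adj v ab.2 ∧ ab.2 < ab.1 ∧ ab.1 ≠ M v)
    rw [Nat.card_congr e1, Nat.card_eq_fintype_card, Fintype.card_sigma]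
    refine Finset.sum_congr rfl fun v _ => ?_
    rw [Fintype.card_subtype]
    have hfilt : (Finset.univ.filter fun ab : V × V =>
        G.Adj v ab.1 ∧ G.Adj v ab.2 ∧ ab.2 < ab.1 ∧ ab.1 ≠ M v) =
        ((((G.neighborFinset v).erase (M v)) ×ˢ ((G.neighborFinset v).erase (M v))).filter
          fun p => p.2 < p.1) := by
      ext ⟨a, b⟩
      simp only [Finset.mem_filter, Finset.mem_univ, true_and, Finset.mem_product,
        Finset.mem_erase, SimpleGraph.mem_neighborFinset]
      constructor
      · rintro ⟨ha, hb, hlt, hne⟩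
        refine ⟨⟨⟨hne, ha⟩, ⟨?_, hb⟩⟩, hlt⟩
        exact ne_of_lt (lt_of_lt_of_le hlt ((hM v).2 a ha))
      · rintro ⟨⟨⟨hne, ha⟩, ⟨-, hb⟩⟩, hlt⟩
        exact ⟨ha, hb, hlt, hne⟩
    rw [hfilt, aux_pairs, Finset.card_erase_of_mem
      ((SimpleGraph.mem_neighborFinset _ _ _).2 (hM v).1), SimpleGraph.card_neighborFinset_eq_degree]
  -- assemble
  have hk : T_G.edgeFinset.card + 1 = m := by
    rw [hm]
    exact htree.card_edgeFinset
  rw [Nat.card_coe_set_eq]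
  show (Diff.ncard : ℤ) = _
  rw [hunion, Set.ncard_union_eq hdisj, hcardSX, hcardSY]
  have hsum : ((∑ v : V, (G.degree v - 1).choose 2 : ℕ) : ℤ)
      = ∑ v : V, ((G.degree v - 1).choose 2 : ℤ) := by push_cast; rfl
  push_cast [Nat.cast_sub hkn]
  have hm1 : (T_G.edgeFinset.card : ℤ) = (m : ℤ) - 1 := by
    have := hk
    omega
  rw [hm1]
  ring
end
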